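/- arXiv:1504.04201 — 4 statements merged into one kernel-verified Lean document; each statement's English description precedes it below -/
import Mathlib

section
/- Let f = x_0^{a_0} x_1^{a_1} ⋯ x_{n+1}^{a_{n+1}} be a monomial with f ∈ I_{B_n}^{(m)}, and set t = min{a_0, a_{n+1}}. Then the monomial g = x_0^{t} x_1^{a_1} ⋯ x_n^{a_n} x_{n+1}^{t} also belongs to I_{B_n}^{(m)}. -/
open MvPolynomial
open Fin.NatCast

lemma prod_pow_mem_pow_sum' {R : Type*} [CommRing R] {ι : Type*} [DecidableEq ι]
    (I : Ideal R) (S : Finset ι) (f : ι → R) (a : ι → ℕ) (h : ∀ j ∈ S, f j ∈ I) :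
    ∏ j ∈ S, f j ^ a j ∈ I ^ (∑ j ∈ S, a j) := by
  induction S using Finset.induction with
  | empty => simp
  | insert j S hj ih =>
    rw [Finset.prod_insert hj, Finset.sum_insert hj, pow_add]
    exact Ideal.mul_mem_mul (Ideal.pow_mem_pow (h _ (Finset.mem_insert_self _ _)) _)
      (ih fun k hk => h k (Finset.mem_insert_of_mem hk))

lemma monom_mem_span_pow {K : Type*} [Field K] {N : ℕ} (T : Finset (Fin N))
    (a : Fin N → ℕ) (m : ℕ) (hm : m ≤ ∑ j ∈ T, a j) :
    (∏ i, X i ^ a i : MvPolynomial (Fin N) K) ∈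
      (Ideal.span (X '' (T : Set (Fin N)))) ^ m := by
  have h1 : (∏ j ∈ T, X j ^ a j : MvPolynomial (Fin N) K) ∈
      (Ideal.span (X '' (T : Set (Fin N)))) ^ (∑ j ∈ T, a j) :=
    prod_pow_mem_pow_sum' _ T _ a fun j hj =>
      Ideal.subset_span ⟨j, by simpa using hj, rfl⟩
  have h2 := Ideal.pow_le_pow_right hm h1
  have h3 : (∏ i, X i ^ a i : MvPolynomial (Fin N) K)
      = (∏ j ∈ Finset.univ \ T, X j ^ a j) * ∏ j ∈ T, X j ^ a j :=
    (Finset.prod_sdiff (Finset.subset_univ T)).symm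
  rw [h3]
  exact Ideal.mul_mem_left _ _ h2

lemma sum_ge_of_monom_mem {K : Type*} [Field K] {N : ℕ} (T : Finset (Fin N))
    (a : Fin N → ℕ) (m : ℕ)
    (h : (∏ i, X i ^ a i : MvPolynomial (Fin N) K) ∈
      (Ideal.span (X '' (T : Set (Fin N)))) ^ m) :
    m ≤ ∑ j ∈ T, a j := by
  set φ : MvPolynomial (Fin N) K →ₐ[K] Polynomial K :=
    aeval (fun j => if j ∈ T then Polynomial.X else 1) with hφ
  have hmap : Ideal.map φ (Ideal.span (X '' (T : Set (Fin N))))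
      ≤ Ideal.span {(Polynomial.X : Polynomial K)} := by
    rw [Ideal.map_span]
    apply Ideal.span_le.2
    rintro p ⟨q, ⟨j, hj, rfl⟩, rfl⟩
    have : φ (X j) = Polynomial.X := by simp [hφ, aeval_X, Finset.mem_coe.1 (by simpa using hj)]
    rw [this]
    exact Ideal.subset_span rfl
  have hmem : φ (∏ i, X i ^ a i) ∈ (Ideal.span {(Polynomial.X : Polynomial K)}) ^ m := by
    have h1 : φ (∏ i, X i ^ a i) ∈ Ideal.map φ ((Ideal.span (X '' (T : Set (Fin N)))) ^ m) :=
      Ideal.mem_map_of_mem _ h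
    rw [Ideal.map_pow] at h1
    exact Ideal.pow_right_mono hmap m h1
  have heval : φ (∏ i, X i ^ a i) = Polynomial.X ^ (∑ j ∈ T, a j) := by
    rw [map_prod]
    have : ∀ i : Fin N, φ (X i ^ a i)
        = (if i ∈ T then (Polynomial.X : Polynomial K) else 1) ^ a i := by
      intro i; rw [map_pow, hφ, aeval_X]
    simp_rw [this]
    rw [← Finset.prod_subset (Finset.subset_univ T)
      (fun x _ hx => by simp [hx])]
    rw [Finset.prod_congr rfl (fun x hx => by simp [hx] : ∀ x ∈ T,
      (if x ∈ T then (Polynomial.X : Polynomial K) else 1) ^ a x = Polynomial.X ^ a x)]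
    exact Finset.prod_pow_eq_pow_sum T a Polynomial.X
  rw [heval, Ideal.span_singleton_pow, Ideal.mem_span_singleton] at hmem
  by_contra hlt
  push_neg at hlt
  have := (Polynomial.X_pow_dvd_iff.1 hmem) (∑ j ∈ T, a j) hlt
  simp at this

/-- The subtree (arc) of `n-2` consecutive cycle vertices of the `n`-cycle `Q_n`
(on vertices `1,…,n` inside `Fin (n+2)`), starting at vertex `i+1`, for `i = 0,…,n-1`.
The family `arcT n i`, `i < n`, is exactly the family `𝒯` of subtrees of `Q_n`
with `n-2` vertices. -/
def arcT (n i : ℕ) : Finset (Fin (n + 2)) :=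
  (Finset.range (n - 2)).image fun t => (((i + t) % n + 1 : ℕ) : Fin (n + 2))

/-- The monomial prime ideal `⟨x_v⟩ + ⟨x_j : j ∈ S⟩`. -/
noncomputable def apexIdeal (K : Type*) [Field K] (n : ℕ) (v : Fin (n + 2))
    (S : Finset (Fin (n + 2))) : Ideal (MvPolynomial (Fin (n + 2)) K) :=
  Ideal.span (insert (X v) (X '' (S : Set (Fin (n+2))) : Set (MvPolynomial (Fin (n + 2)) K)))

/-- The `m`-th symbolic power `I_{B_n}^{(m)} = ⋂_{S ∈ 𝒯} (I_{[0,S]}^m ∩ I_{[n+1,S]}^m)`. -/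
noncomputable def symbPow (K : Type*) [Field K] (n m : ℕ) : Ideal (MvPolynomial (Fin (n + 2)) K) :=
  ⨅ i ∈ Finset.range n,
    apexIdeal K n 0 (arcT n i) ^ m ⊓ apexIdeal K n ((n + 1 : ℕ) : Fin (n + 2)) (arcT n i) ^ m

/-- The monomial `x_0^{a_0} x_1^{a_1} ⋯ x_{n+1}^{a_{n+1}}`. -/
noncomputable def monom (K : Type*) [Field K] (n : ℕ) (a : Fin (n + 2) → ℕ) :
    MvPolynomial (Fin (n + 2)) K :=
  ∏ i, X i ^ a i

/-- `α_{n,m}`: the least total degree of a monomial lying in `I_{B_n}^{(m)}`. -/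
noncomputable def alphaSymb (K : Type*) [Field K] (n m : ℕ) : ℕ :=
  sInf {d | ∃ a : Fin (n + 2) → ℕ, (∑ i, a i) = d ∧ monom K n a ∈ symbPow K n m}

/-- The Stanley–Reisner ideal `I_{B_n}` of the bipyramid `B_n`, presented by its
quadratic generators: `x_0 x_{n+1}` together with `x_i x_j` for non-adjacent
vertices `i, j` of the cycle `Q_n`. -/
noncomputable def bipyrIdeal (K : Type*) [Field K] (n : ℕ) : Ideal (MvPolynomial (Fin (n + 2)) K) :=
  Ideal.span ({X (0 : Fin (n + 2)) * X ((n + 1 : ℕ) : Fin (n + 2))} ∪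
    {p | ∃ i j : ℕ, 1 ≤ i ∧ i ≤ n ∧ 1 ≤ j ∧ j ≤ n ∧ i ≠ j ∧
      j ≠ i % n + 1 ∧ i ≠ j % n + 1 ∧
      p = X ((i : ℕ) : Fin (n + 2)) * X ((j : ℕ) : Fin (n + 2))})


lemma arc_ne (n : ℕ) (hn : 3 ≤ n) {i : ℕ} {j : Fin (n + 2)} (hj : j ∈ arcT n i) :
    j ≠ 0 ∧ j ≠ ((n + 1 : ℕ) : Fin (n + 2)) := by
  simp only [arcT, Finset.mem_image, Finset.mem_range] at hj
  obtain ⟨t, _, rfl⟩ := hj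
  have hlt : (i + t) % n < n := Nat.mod_lt _ (by omega)
  have hv : (((i + t) % n + 1 : ℕ) : Fin (n + 2)).val = (i + t) % n + 1 := by
    rw [Fin.val_natCast, Nat.mod_eq_of_lt (by omega)]
  have hw : (((n + 1 : ℕ)) : Fin (n + 2)).val = n + 1 := by
    rw [Fin.val_natCast, Nat.mod_eq_of_lt (by omega)]
  constructor
  · intro h; have := congrArg Fin.val h; rw [hv] at this; simp at this
  · intro h; have := congrArg Fin.val h; rw [hv, hw] at this; omega

lemma apexIdeal_eq' (K : Type*) [Field K] (n : ℕ) (v : Fin (n + 2))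
    (S : Finset (Fin (n + 2))) :
    apexIdeal K n v S
      = Ideal.span (X '' ((insert v S : Finset (Fin (n+2))) : Set (Fin (n+2)))) := by
  rw [apexIdeal, Finset.coe_insert, Set.image_insert_eq]

/-- If `f = x_0^{a_0} x_1^{a_1} ⋯ x_{n+1}^{a_{n+1}} ∈ I_{B_n}^{(m)}` and
`t = min {a_0, a_{n+1}}`, then `g = x_0^t x_1^{a_1} ⋯ x_n^{a_n} x_{n+1}^t ∈ I_{B_n}^{(m)}`. -/
theorem symmetrized_monom_mem_symbPow (K : Type*) [Field K] (n : ℕ) (hn : 3 ≤ n) (m : ℕ)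
    (a : Fin (n + 2) → ℕ) (hf : monom K n a ∈ symbPow K n m) :
    monom K n (fun j => if j = 0 ∨ j = ((n + 1 : ℕ) : Fin (n + 2)) then
        min (a 0) (a ((n + 1 : ℕ) : Fin (n + 2))) else a j) ∈ symbPow K n m := by
  set t := min (a 0) (a ((n + 1 : ℕ) : Fin (n + 2))) with ht
  set a' : Fin (n + 2) → ℕ :=
    fun j => if j = 0 ∨ j = ((n + 1 : ℕ) : Fin (n + 2)) then t else a j with ha'
  simp only [symbPow, Ideal.mem_iInf, Ideal.mem_inf] at hf ⊢
  intro i hi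
  obtain ⟨h0, h1⟩ := hf i hi
  have h0ne : (0 : Fin (n + 2)) ∉ arcT n i := fun h => (arc_ne n hn h).1 rfl
  have h1ne : ((n + 1 : ℕ) : Fin (n + 2)) ∉ arcT n i := fun h => (arc_ne n hn h).2 rfl
  rw [monom, apexIdeal_eq'] at h0 h1
  have H0 := sum_ge_of_monom_mem _ a m h0
  have H1 := sum_ge_of_monom_mem _ a m h1
  rw [Finset.sum_insert h0ne] at H0
  rw [Finset.sum_insert h1ne] at H1
  have harc : ∀ j ∈ arcT n i, a' j = a j := by
    intro j hj
    have h := arc_ne n hn hj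
    show (if j = 0 ∨ j = ((n + 1 : ℕ) : Fin (n + 2)) then t else a j) = a j
    rw [if_neg (by tauto)]
  have hmin : m ≤ t + ∑ j ∈ arcT n i, a j := by omega
  have hsum : ∑ j ∈ arcT n i, a' j = ∑ j ∈ arcT n i, a j :=
    Finset.sum_congr rfl harc
  constructor
  · rw [monom, apexIdeal_eq']
    apply monom_mem_span_pow
    rw [Finset.sum_insert h0ne, hsum]
    have h0' : a' 0 = t := if_pos (Or.inl rfl)
    rw [h0']; exact hmin
  · rw [monom, apexIdeal_eq']
    apply monom_mem_span_pow
    rw [Finset.sum_insert h1ne, hsum]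
    have h1' : a' ((n + 1 : ℕ) : Fin (n + 2)) = t := if_pos (Or.inr rfl)
    rw [h1']; exact hmin
end

section
/- Let k ≥ 3 and n = 2k−1. For every integer s ≥ 1, α_{2k−1, s(2k−3)} = s(2k−1); that is, the least total degree of a monomial belonging to I_{B_{2k−1}}^{(s(2k−3))} equals s(2k−1). -/
open MvPolynomial
open Fin.NatCast

lemma monom_mem_apex_pow_iff (K : Type*) [Field K] (n m : ℕ) (v : Fin (n+2))
    (S : Finset (Fin (n+2))) (hv : v ∉ S) (a : Fin (n+2) → ℕ) :
    monom K n a ∈ apexIdeal K n v S ^ m ↔ m ≤ a v + ∑ j ∈ S, a j := by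
  have hgen : ∀ j ∈ insert v S, (X j : MvPolynomial (Fin (n+2)) K) ∈ apexIdeal K n v S := by
    intro j hj
    apply Ideal.subset_span
    rcases Finset.mem_insert.1 hj with h | h
    · exact h ▸ Set.mem_insert _ _
    · exact Set.mem_insert_iff.2 (Or.inr ⟨j, h, rfl⟩)
  constructor
  · intro h
    set φ : MvPolynomial (Fin (n+2)) K →ₐ[K] Polynomial K :=
      aeval (fun j => if j ∈ insert v S then (Polynomial.X : Polynomial K) else 1) with hφ
    have hmap : Ideal.map φ (apexIdeal K n v S) ≤ Ideal.span {(Polynomial.X : Polynomial K)} := by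
      rw [apexIdeal, Ideal.map_span, Ideal.span_le]
      rintro p ⟨q, hq, rfl⟩
      rcases hq with rfl | ⟨j, hj, rfl⟩
      · simp only [hφ, AlgHom.coe_toRingHom, aeval_X]
        rw [if_pos (Finset.mem_insert_self v S)]
        exact Ideal.subset_span rfl
      · simp only [hφ, AlgHom.coe_toRingHom, aeval_X]
        rw [if_pos (Finset.mem_insert_of_mem hj)]
        exact Ideal.subset_span rfl
    have h2 : φ (monom K n a) ∈ Ideal.span {(Polynomial.X : Polynomial K)} ^ m := by
      have := Ideal.mem_map_of_mem (φ : MvPolynomial (Fin (n+2)) K →+* Polynomial K) h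
      rw [Ideal.map_pow] at this
      exact Ideal.pow_right_mono hmap m this
    have h3 : φ (monom K n a) = Polynomial.X ^ (a v + ∑ j ∈ S, a j) := by
      rw [monom, map_prod]
      simp only [hφ, map_pow, aeval_X]
      have : ∀ i : Fin (n+2), ((if i ∈ insert v S then (Polynomial.X : Polynomial K) else 1)) ^ a i
          = if i ∈ insert v S then (Polynomial.X : Polynomial K) ^ a i else 1 := by
        intro i; split
        · rfl
        · exact one_pow _
      simp only [this]
      rw [Finset.prod_ite_mem, Finset.univ_inter, Finset.prod_pow_eq_pow_sum,
        Finset.sum_insert hv]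
    rw [h3, Ideal.span_singleton_pow, Ideal.mem_span_singleton] at h2
    have := Polynomial.natDegree_le_of_dvd h2 (pow_ne_zero _ Polynomial.X_ne_zero)
    simpa using this
  · intro h
    rw [monom, ← Finset.prod_mul_prod_compl (insert v S) (fun i => (X i : MvPolynomial (Fin (n+2)) K) ^ a i)]
    apply Ideal.mul_mem_right
    have h1 : ∏ j ∈ insert v S, (X j : MvPolynomial (Fin (n+2)) K) ^ a j
        ∈ apexIdeal K n v S ^ (∑ j ∈ insert v S, a j) := by
      rw [← Finset.prod_pow_eq_pow_sum]
      exact Ideal.prod_mem_prod fun j hj => Ideal.pow_mem_pow (hgen j hj) _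
    refine Ideal.pow_le_pow_right ?_ h1
    rwa [Finset.sum_insert hv]

lemma arc_sum {n : ℕ} (hn : 1 ≤ n) (i : ℕ) (a : Fin (n+2) → ℕ) :
    ∑ j ∈ arcT n i, a j = ∑ t ∈ Finset.range (n-2), a (((i + t) % n + 1 : ℕ) : Fin (n+2)) := by
  rw [arcT, Finset.sum_image]
  intro x hx y hy hxy
  simp only [Finset.coe_range, Set.mem_Iio, Finset.mem_coe, Finset.mem_range] at hx hy
  have hmod : (i + x) % n + 1 = (i + y) % n + 1 := by
    have h1 : ((i + x) % n + 1) < n + 2 := by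
      have := Nat.mod_lt (i + x) (by omega : 0 < n); omega
    have h2 : ((i + y) % n + 1) < n + 2 := by
      have := Nat.mod_lt (i + y) (by omega : 0 < n); omega
    have := congrArg Fin.val hxy
    rwa [Fin.val_cast_of_lt h1, Fin.val_cast_of_lt h2] at this
  have : (i + x) % n = (i + y) % n := by omega
  have hme : x ≡ y [MOD n] := Nat.ModEq.add_left_cancel' i this
  have := hme.eq_of_lt_of_lt (by omega) (by omega)
  exact this

lemma mem_arcT_val {n : ℕ} (hn : 1 ≤ n) {i : ℕ} {j : Fin (n+2)} (hj : j ∈ arcT n i) :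
    1 ≤ j.val ∧ j.val ≤ n := by
  rw [arcT, Finset.mem_image] at hj
  obtain ⟨t, _, rfl⟩ := hj
  have h1 : (i + t) % n < n := Nat.mod_lt _ (by omega)
  rw [Fin.val_cast_of_lt (by omega)]
  omega

lemma zero_not_mem_arcT {n : ℕ} (hn : 1 ≤ n) (i : ℕ) : (0 : Fin (n+2)) ∉ arcT n i := by
  intro h
  have := mem_arcT_val hn h
  simp at this

lemma last_not_mem_arcT {n : ℕ} (hn : 1 ≤ n) (i : ℕ) :
    (((n+1 : ℕ)) : Fin (n+2)) ∉ arcT n i := by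
  intro h
  have := mem_arcT_val hn h
  rw [Fin.val_cast_of_lt (by omega)] at this
  omega

lemma sum_range_rot (n : ℕ) (g : ℕ → ℕ) :
    ∑ i ∈ Finset.range n, g ((i + 1) % n) = ∑ i ∈ Finset.range n, g i := by
  cases n with
  | zero => simp
  | succ m =>
    rw [Finset.sum_range_succ, Finset.sum_range_succ' g m]
    congr 1
    · apply Finset.sum_congr rfl
      intro i hi
      simp only [Finset.mem_range] at hi
      rw [Nat.mod_eq_of_lt (by omega)]
    · simp

lemma sum_range_shift (n t : ℕ) (g : ℕ → ℕ) :
    ∑ i ∈ Finset.range n, g ((i + t) % n) = ∑ i ∈ Finset.range n, g (i % n) := by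
  induction t with
  | zero => simp
  | succ t ih =>
    have key : ∀ i : ℕ, (i + (t+1)) % n = ((i + 1) % n + t) % n := by
      intro i
      rw [Nat.mod_add_mod]
      ring_nf
    calc ∑ i ∈ Finset.range n, g ((i + (t+1)) % n)
        = ∑ i ∈ Finset.range n, (fun j => g ((j + t) % n)) ((i + 1) % n) := by
          apply Finset.sum_congr rfl; intro i _; rw [key i]
      _ = ∑ i ∈ Finset.range n, g ((i + t) % n) := by exact sum_range_rot n (fun j => g ((j + t) % n))
      _ = ∑ i ∈ Finset.range n, g (i % n) := ih

lemma sum_arcs {n : ℕ} (hn : 1 ≤ n) (f : ℕ → ℕ) :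
    ∑ i ∈ Finset.range n, ∑ t ∈ Finset.range (n-2), f ((i + t) % n + 1)
      = (n - 2) * ∑ r ∈ Finset.range n, f (r + 1) := by
  rw [Finset.sum_comm]
  have step : ∀ t, ∑ i ∈ Finset.range n, f ((i + t) % n + 1)
      = ∑ r ∈ Finset.range n, f (r + 1) := by
    intro t
    rw [sum_range_shift n t (fun j => f (j + 1))]
    apply Finset.sum_congr rfl
    intro i hi
    simp only [Finset.mem_range] at hi
    rw [Nat.mod_eq_of_lt hi]
  rw [Finset.sum_congr rfl (fun t _ => step t), Finset.sum_const, Finset.card_range,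
    smul_eq_mul]

lemma sum_fin_decomp (n : ℕ) (a : Fin (n+2) → ℕ) :
    ∑ j, a j = a 0 + a (((n+1 : ℕ)) : Fin (n+2))
      + ∑ r ∈ Finset.range n, a (((r+1 : ℕ)) : Fin (n+2)) := by
  have h0 : ∑ j, a j = ∑ i ∈ Finset.range (n+2), a ((i : ℕ) : Fin (n+2)) := by
    rw [← Fin.sum_univ_eq_sum_range]
    apply Finset.sum_congr rfl
    intro j _
    rw [Fin.cast_val_eq_self]
  rw [h0, Finset.sum_range_succ, Finset.sum_range_succ']
  have : ((0 : ℕ) : Fin (n+2)) = 0 := by simp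
  rw [this]
  ring

lemma monom_mem_symbPow_iff (K : Type*) [Field K] (n m : ℕ) (hn : 1 ≤ n)
    (a : Fin (n+2) → ℕ) :
    monom K n a ∈ symbPow K n m ↔ ∀ i ∈ Finset.range n,
      m ≤ a 0 + ∑ j ∈ arcT n i, a j ∧
      m ≤ a (((n+1 : ℕ)) : Fin (n+2)) + ∑ j ∈ arcT n i, a j := by
  simp only [symbPow, Submodule.mem_iInf, Submodule.mem_inf]
  constructor
  · intro h i hi
    obtain ⟨h1, h2⟩ := h i hi
    exact ⟨(monom_mem_apex_pow_iff K n m _ _ (zero_not_mem_arcT hn i) a).1 h1,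
      (monom_mem_apex_pow_iff K n m _ _ (last_not_mem_arcT hn i) a).1 h2⟩
  · intro h i hi
    obtain ⟨h1, h2⟩ := h i hi
    exact ⟨(monom_mem_apex_pow_iff K n m _ _ (zero_not_mem_arcT hn i) a).2 h1,
      (monom_mem_apex_pow_iff K n m _ _ (last_not_mem_arcT hn i) a).2 h2⟩



/-- For `k ≥ 3`, `n = 2k - 1` and every `s ≥ 1`:
`α_{2k-1, s(2k-3)} = s(2k-1)`. -/
theorem alpha_odd_case (K : Type*) [Field K] (k s : ℕ) (hk : 3 ≤ k) (hs : 1 ≤ s) :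
    alphaSymb K (2 * k - 1) (s * (2 * k - 3)) = s * (2 * k - 1) := by
  set n := 2 * k - 1 with hndef
  set m := s * (2 * k - 3) with hmdef
  have hn5 : 5 ≤ n := by omega
  have hn1 : 1 ≤ n := by omega
  have h32 : 2 * k - 3 = n - 2 := by omega
  have hm' : m = s * (n - 2) := by rw [hmdef, h32]
  -- the witness monomial x_1^s ⋯ x_n^s
  set a0 : Fin (n+2) → ℕ := fun j => if 1 ≤ j.val ∧ j.val ≤ n then s else 0 with ha0
  have ha00 : a0 0 = 0 := by simp [ha0]
  have ha0l : a0 (((n+1 : ℕ)) : Fin (n+2)) = 0 := by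
    rw [ha0]
    simp only
    rw [Fin.val_cast_of_lt (show n+1 < n+2 by omega)]
    simp
  have ha0mid : ∀ q : ℕ, 1 ≤ q → q ≤ n → a0 ((q : ℕ) : Fin (n+2)) = s := by
    intro q h1 h2
    rw [ha0]
    simp only
    rw [Fin.val_cast_of_lt (show q < n+2 by omega), if_pos ⟨h1, h2⟩]
  have hsum0 : ∑ j, a0 j = s * n := by
    rw [sum_fin_decomp, ha00, ha0l]
    have h3 : ∀ r ∈ Finset.range n, a0 (((r+1 : ℕ)) : Fin (n+2)) = s := by
      intro r hr
      simp only [Finset.mem_range] at hr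
      exact ha0mid (r+1) (by omega) (by omega)
    rw [Finset.sum_congr rfl h3, Finset.sum_const, Finset.card_range, smul_eq_mul]
    ring
  have hmem0 : monom K n a0 ∈ symbPow K n m := by
    rw [monom_mem_symbPow_iff K n m hn1]
    intro i hi
    have harc : ∑ j ∈ arcT n i, a0 j = (n-2) * s := by
      rw [arc_sum hn1]
      have h4 : ∀ t ∈ Finset.range (n-2), a0 ((((i+t) % n + 1 : ℕ)) : Fin (n+2)) = s := by
        intro t ht
        have h1 : (i+t) % n < n := Nat.mod_lt _ (by omega)
        exact ha0mid _ (by omega) (by omega)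
      rw [Finset.sum_congr rfl h4, Finset.sum_const, Finset.card_range, smul_eq_mul]
    rw [harc, ha00, ha0l]
    constructor <;> · rw [hm', zero_add, mul_comm]
  -- lower bound
  have hlow : ∀ d ∈ {d | ∃ a : Fin (n + 2) → ℕ,
      (∑ i, a i) = d ∧ monom K n a ∈ symbPow K n m}, s * n ≤ d := by
    rintro d ⟨a, rfl, hmem⟩
    rw [monom_mem_symbPow_iff K n m hn1 a] at hmem
    set A := ∑ r ∈ Finset.range n, a (((r+1 : ℕ)) : Fin (n+2)) with hA
    set b0 := a 0 with hb0
    set b1 := a (((n+1 : ℕ)) : Fin (n+2)) with hb1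
    have hSA : ∑ i ∈ Finset.range n, (∑ j ∈ arcT n i, a j) = (n-2) * A := by
      have hcongr : ∀ i ∈ Finset.range n, ∑ j ∈ arcT n i, a j
          = ∑ t ∈ Finset.range (n-2), (fun r : ℕ => a ((r : ℕ) : Fin (n+2))) ((i+t) % n + 1) :=
        fun i _ => arc_sum hn1 i a
      rw [Finset.sum_congr rfl hcongr]
      exact sum_arcs hn1 (fun r : ℕ => a ((r : ℕ) : Fin (n+2)))
    have hc0 : n * m ≤ n * b0 + (n-2) * A := by
      have h5 : ∀ i ∈ Finset.range n, m ≤ b0 + ∑ j ∈ arcT n i, a j :=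
        fun i hi => (hmem i hi).1
      have hsum := Finset.sum_le_sum h5
      rw [Finset.sum_const, Finset.card_range, smul_eq_mul, Finset.sum_add_distrib,
        Finset.sum_const, Finset.card_range, smul_eq_mul, hSA] at hsum
      exact hsum
    have hc1 : n * m ≤ n * b1 + (n-2) * A := by
      have h5 : ∀ i ∈ Finset.range n, m ≤ b1 + ∑ j ∈ arcT n i, a j :=
        fun i hi => (hmem i hi).2
      have hsum := Finset.sum_le_sum h5
      rw [Finset.sum_const, Finset.card_range, smul_eq_mul, Finset.sum_add_distrib,
        Finset.sum_const, Finset.card_range, smul_eq_mul, hSA] at hsum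
      exact hsum
    rw [sum_fin_decomp n a, ← hA, ← hb0, ← hb1]
    obtain ⟨p, hp⟩ : ∃ p, n = p + 2 := ⟨n - 2, by omega⟩
    have hp3 : 3 ≤ p := by omega
    have hn2p : n - 2 = p := by omega
    rw [hn2p] at hc0 hc1
    rw [hp] at hc0 hc1 ⊢
    rw [hm', hn2p] at hc0 hc1
    have h2p : 0 < 2 * p := by omega
    have hcalc : 2 * p * (s * (p + 2)) ≤ 2 * p * (b0 + b1 + A) := by
      calc 2 * p * (s * (p + 2)) = (p+2) * (s*p) + (p+2) * (s*p) := by ring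
        _ ≤ ((p+2) * b0 + p * A) + ((p+2) * b1 + p * A) := Nat.add_le_add hc0 hc1
        _ ≤ (2*p * b0 + p * A) + (2*p * b1 + p * A) := by
            have hle : p + 2 ≤ 2 * p := by omega
            gcongr
        _ = 2 * p * (b0 + b1 + A) := by ring
    exact Nat.le_of_mul_le_mul_left hcalc h2p
  have hwit : s * n ∈ {d | ∃ a : Fin (n + 2) → ℕ,
      (∑ i, a i) = d ∧ monom K n a ∈ symbPow K n m} := ⟨a0, hsum0, hmem0⟩
  unfold alphaSymb
  exact le_antisymm (Nat.sInf_le hwit) (le_csInf ⟨s * n, hwit⟩ hlow)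
end

section
/- Let k ≥ 2 and n = 2k. No monomial of total degree strictly less than k belongs to I_{B_{2k}}^{(k−1)}. -/
open MvPolynomial
open Fin.NatCast

lemma key_lemma (K : Type*) [Field K] {N : ℕ} (U : Finset (Fin N)) (a : Fin N → ℕ) (m : ℕ)
    (h : (∏ i, X i ^ a i) ∈
      (Ideal.span (X '' (U : Set (Fin N))) : Ideal (MvPolynomial (Fin N) K)) ^ m) :
    m ≤ ∑ i ∈ U, a i := by
  classical
  set φ : MvPolynomial (Fin N) K →ₐ[K] Polynomial K :=
    MvPolynomial.aeval (fun j => if j ∈ U then Polynomial.X else 1) with hφ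
  have hmap : Ideal.map φ.toRingHom (Ideal.span (X '' (U : Set (Fin N)))) ≤
      Ideal.span {Polynomial.X} := by
    rw [Ideal.map_span, Ideal.span_le]
    rintro _ ⟨_, ⟨j, hj, rfl⟩, rfl⟩
    simp only [AlgHom.toRingHom_eq_coe, RingHom.coe_coe, hφ, aeval_X]
    rw [if_pos (Finset.mem_coe.mp hj)]
    exact Ideal.subset_span rfl
  have h2 : φ (∏ i, X i ^ a i) ∈ Ideal.span {(Polynomial.X : Polynomial K)} ^ m := by
    have := Ideal.mem_map_of_mem φ.toRingHom h
    rw [Ideal.map_pow] at this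
    exact Ideal.pow_right_mono hmap m this
  have h3 : φ (∏ i, X i ^ a i) = Polynomial.X ^ (∑ i ∈ U, a i) := by
    rw [map_prod]
    have : ∀ i : Fin N, φ (X i ^ a i) = if i ∈ U then Polynomial.X ^ a i else 1 := by
      intro i
      rw [map_pow, hφ, aeval_X]
      split_ifs <;> simp
    rw [Finset.prod_congr rfl fun i _ => this i, Finset.prod_ite_mem, Finset.univ_inter,
      Finset.prod_pow_eq_pow_sum]
  rw [h3, Ideal.span_singleton_pow, Ideal.mem_span_singleton] at h2
  by_contra hlt
  push_neg at hlt
  have := (Polynomial.X_pow_dvd_iff.mp h2) (∑ i ∈ U, a i) hlt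
  simp [Polynomial.coeff_X_pow] at this

lemma apex_bound (K : Type*) [Field K] {n m : ℕ} {v : Fin (n + 2)} {S : Finset (Fin (n + 2))}
    (a : Fin (n + 2) → ℕ) (hv : v ∉ S) (h : monom K n a ∈ apexIdeal K n v S ^ m) :
    m ≤ a v + ∑ j ∈ S, a j := by
  classical
  have hrw : apexIdeal K n v S =
      Ideal.span (X '' ((insert v S : Finset (Fin (n + 2))) : Set (Fin (n + 2)))) := by
    rw [apexIdeal, Finset.coe_insert, Set.image_insert_eq]
  rw [hrw] at h
  have := key_lemma K (insert v S) a m h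
  rwa [Finset.sum_insert hv] at this

lemma aux_not_mem (K : Type*) [Field K] (n m : ℕ) (hn : 0 < n) (hm : 1 ≤ m)
    (a : Fin (n + 2) → ℕ) (hdeg : (∑ i, a i) ≤ m) : monom K n a ∉ symbPow K n m := by
  classical
  intro hmem
  have hcastinj : ∀ p q : ℕ, p < n + 2 → q < n + 2 →
      ((p : Fin (n + 2)) = (q : Fin (n + 2))) → p = q := by
    intro p q hp hq he
    have := congrArg Fin.val he
    rwa [Fin.val_cast_of_lt hp, Fin.val_cast_of_lt hq] at this
  set cyc : Finset (Fin (n + 2)) :=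
    (Finset.range n).image (fun j => ((j + 1 : ℕ) : Fin (n + 2))) with hcyc
  have harcsub : ∀ i, arcT n i ⊆ cyc := by
    intro i x hx
    rw [arcT, Finset.mem_image] at hx
    obtain ⟨t, ht, rfl⟩ := hx
    rw [hcyc, Finset.mem_image]
    exact ⟨(i + t) % n, Finset.mem_range.mpr (Nat.mod_lt _ hn), rfl⟩
  have hcycval : ∀ x ∈ cyc, ∃ j : ℕ, j < n ∧ x = ((j + 1 : ℕ) : Fin (n + 2)) := by
    intro x hx
    rw [hcyc, Finset.mem_image] at hx
    obtain ⟨j, hj, rfl⟩ := hx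
    exact ⟨j, Finset.mem_range.mp hj, rfl⟩
  have h0cyc : (0 : Fin (n + 2)) ∉ cyc := by
    intro hx
    obtain ⟨j, hj, he⟩ := hcycval _ hx
    have h0 : ((0 : ℕ) : Fin (n + 2)) = ((j + 1 : ℕ) : Fin (n + 2)) := by
      rw [Nat.cast_zero]; exact he
    have := hcastinj 0 (j + 1) (by omega) (by omega) h0
    omega
  have htopcyc : (((n + 1 : ℕ)) : Fin (n + 2)) ∉ cyc := by
    intro hx
    obtain ⟨j, hj, he⟩ := hcycval _ hx
    have := hcastinj (n + 1) (j + 1) (by omega) (by omega) he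
    omega
  have h0top : (0 : Fin (n + 2)) ≠ (((n + 1 : ℕ)) : Fin (n + 2)) := by
    intro he
    have h0 : ((0 : ℕ) : Fin (n + 2)) = (((n + 1 : ℕ)) : Fin (n + 2)) := by
      rw [Nat.cast_zero]; exact he
    have := hcastinj 0 (n + 1) (by omega) (by omega) h0
    omega
  set T := ∑ j ∈ cyc, a j with hT
  set a0 := a 0 with ha0
  set b := a (((n + 1 : ℕ)) : Fin (n + 2)) with hb
  have htot : a0 + b + T ≤ m := by
    have hsub : insert (0 : Fin (n + 2)) (insert (((n + 1 : ℕ)) : Fin (n + 2)) cyc) ⊆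
        Finset.univ := Finset.subset_univ _
    have hnotin : (0 : Fin (n + 2)) ∉ insert (((n + 1 : ℕ)) : Fin (n + 2)) cyc := by
      intro h
      rcases Finset.mem_insert.mp h with he | hc
      · exact h0top he
      · exact h0cyc hc
    have hle := Finset.sum_le_sum_of_subset (f := a) hsub
    rw [Finset.sum_insert hnotin, Finset.sum_insert htopcyc] at hle
    omega
  have harc : ∀ i ∈ Finset.range n,
      m ≤ a0 + ∑ j ∈ arcT n i, a j ∧ m ≤ b + ∑ j ∈ arcT n i, a j := by
    intro i hi
    have h1 : monom K n a ∈
        apexIdeal K n 0 (arcT n i) ^ m ⊓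
          apexIdeal K n ((n + 1 : ℕ) : Fin (n + 2)) (arcT n i) ^ m := by
      have h2 := hmem
      rw [symbPow] at h2
      exact Ideal.mem_iInf.mp (Ideal.mem_iInf.mp h2 i) hi
    obtain ⟨hA, hB⟩ := Submodule.mem_inf.mp h1
    have h0arc : (0 : Fin (n + 2)) ∉ arcT n i := fun h => h0cyc (harcsub i h)
    have htarc : (((n + 1 : ℕ)) : Fin (n + 2)) ∉ arcT n i := fun h => htopcyc (harcsub i h)
    exact ⟨apex_bound K a h0arc hA, apex_bound K a htarc hB⟩
  have harcT : ∀ i, ∑ j ∈ arcT n i, a j ≤ T :=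
    fun i => Finset.sum_le_sum_of_subset (harcsub i)
  obtain ⟨hA0, hB0⟩ := harc 0 (Finset.mem_range.mpr hn)
  have hs0T := harcT 0
  obtain ⟨hTeq, ha0z, hbz⟩ : T = m ∧ a0 = 0 ∧ b = 0 := by omega
  have hTpos : T ≠ 0 := by omega
  obtain ⟨x, hxcyc, hxpos⟩ := Finset.exists_ne_zero_of_sum_ne_zero (hT ▸ hTpos)
  obtain ⟨j, hj, rfl⟩ := hcycval x hxcyc
  set i0 := (j + 1) % n with hi0
  have hi0n : i0 < n := Nat.mod_lt _ hn
  have hxnotin : ((j + 1 : ℕ) : Fin (n + 2)) ∉ arcT n i0 := by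
    intro hx
    rw [arcT, Finset.mem_image] at hx
    obtain ⟨t, ht, he⟩ := hx
    rw [Finset.mem_range] at ht
    have hval : (i0 + t) % n + 1 = j + 1 :=
      hcastinj _ _ (by have := Nat.mod_lt (i0 + t) hn; omega) (by omega) he
    have hmod : (j + 1 + t) % n = j := by
      have h5 : (i0 + t) % n = (j + 1 + t) % n := by
        rw [hi0, Nat.mod_add_mod]
      omega
    have hmeq : (j + (t + 1)) % n = (j + 0) % n := by
      rw [show j + (t + 1) = j + 1 + t from by omega, hmod, Nat.add_zero,
        Nat.mod_eq_of_lt hj]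
    have hdvd : n ∣ (t + 1) := by
      have h6 := (Nat.ModEq.add_left_cancel' j hmeq.symm).symm
      exact (Nat.modEq_zero_iff_dvd).mp h6
    have := Nat.le_of_dvd (by omega) hdvd
    omega
  have hsub2 : arcT n i0 ⊆ cyc.erase ((j + 1 : ℕ) : Fin (n + 2)) :=
    Finset.subset_erase.mpr ⟨harcsub i0, hxnotin⟩
  have hsum2 : ∑ v ∈ arcT n i0, a v ≤ ∑ v ∈ cyc.erase ((j + 1 : ℕ) : Fin (n + 2)), a v :=
    Finset.sum_le_sum_of_subset hsub2
  have hsplit : a ((j + 1 : ℕ) : Fin (n + 2)) +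
      ∑ v ∈ cyc.erase ((j + 1 : ℕ) : Fin (n + 2)), a v = T :=
    Finset.add_sum_erase cyc a hxcyc
  obtain ⟨hAi, _⟩ := harc i0 (Finset.mem_range.mpr hi0n)
  have hax : 1 ≤ a ((j + 1 : ℕ) : Fin (n + 2)) := Nat.one_le_iff_ne_zero.mpr hxpos
  omega

/-- For `k ≥ 2` and `n = 2k`, no monomial of total degree strictly less than `k`
belongs to `I_{B_{2k}}^{(k-1)}`. -/
theorem no_low_degree_monomial_even (K : Type*) [Field K] (k : ℕ) (hk : 2 ≤ k)
    (a : Fin (2 * k + 2) → ℕ) (hdeg : (∑ i, a i) < k) :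
    monom K (2 * k) a ∉ symbPow K (2 * k) (k - 1) :=
  aux_not_mem K (2 * k) (k - 1) (by omega) (by omega) a (by omega)
end

section
/- Let k ≥ 3 and n = 2k−1. No monomial of total degree strictly less than 2k−1 belongs to I_{B_{2k−1}}^{(2k−3)}. -/
open MvPolynomial
open Fin.NatCast

lemma mem_apexPow_deg (K : Type*) [Field K] {n m : ℕ} (v : Fin (n + 2))
    (S : Finset (Fin (n + 2))) (a : Fin (n + 2) → ℕ)
    (h : monom K n a ∈ apexIdeal K n v S ^ m) :
    m ≤ a v + ∑ j ∈ S, a j := by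
  classical
  set f : Fin (n+2) → Polynomial K := fun j => if j = v ∨ j ∈ S then Polynomial.X else 1 with hf
  have hle : Ideal.map (aeval f : MvPolynomial (Fin (n+2)) K →ₐ[K] Polynomial K).toRingHom
      (apexIdeal K n v S) ≤ Ideal.span {Polynomial.X} := by
    rw [apexIdeal, Ideal.map_span, Ideal.span_le]
    rintro p ⟨q, hq, rfl⟩
    rcases Set.mem_insert_iff.mp hq with rfl | ⟨j, hj, rfl⟩
    · simp [f, Ideal.mem_span_singleton]
    · simp only [Finset.mem_coe] at hj
      simp [f, hj, Ideal.mem_span_singleton]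
  have hmem : (aeval f) (monom K n a) ∈ Ideal.span {Polynomial.X ^ m} := by
    have h1 : (aeval f) (monom K n a) ∈
        Ideal.map (aeval f : MvPolynomial (Fin (n+2)) K →ₐ[K] Polynomial K).toRingHom
          (apexIdeal K n v S ^ m) := Ideal.mem_map_of_mem _ h
    rw [Ideal.map_pow] at h1
    have h2 := (Ideal.pow_right_mono hle m) h1
    rwa [Ideal.span_singleton_pow] at h2
  have hval : (aeval f) (monom K n a) =
      Polynomial.X ^ (∑ j ∈ Finset.univ.filter (fun j => j = v ∨ j ∈ S), a j) := by
    rw [monom, map_prod]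
    calc (∏ i, (aeval f) (X i ^ a i))
        = ∏ i, (if i = v ∨ i ∈ S then Polynomial.X ^ a i else (1 : Polynomial K)) := by
          refine Finset.prod_congr rfl fun i _ => ?_
          rw [map_pow, aeval_X, hf]
          by_cases hP : i = v ∨ i ∈ S <;> simp [hP]
      _ = ∏ i ∈ Finset.univ.filter (fun j => j = v ∨ j ∈ S), Polynomial.X ^ a i :=
          (Finset.prod_filter _ _).symm
      _ = _ := Finset.prod_pow_eq_pow_sum _ _ _
  rw [hval, Ideal.mem_span_singleton] at hmem
  have hd : m ≤ ∑ j ∈ Finset.univ.filter (fun j => j = v ∨ j ∈ S), a j := by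
    have := Polynomial.natDegree_le_of_dvd hmem (pow_ne_zero _ Polynomial.X_ne_zero)
    simpa using this
  refine hd.trans ?_
  have hsub : Finset.univ.filter (fun j => j = v ∨ j ∈ S) = insert v S := by
    ext j; simp [Finset.mem_insert]
  rw [hsub]
  by_cases hv : v ∈ S
  · rw [Finset.insert_eq_self.mpr hv]; omega
  · rw [Finset.sum_insert hv]

lemma arcT_sum {n : ℕ} (hn : 3 ≤ n) (i : ℕ) (a : Fin (n + 2) → ℕ) :
    ∑ j ∈ arcT n i, a j = ∑ t ∈ Finset.range (n - 2), a (((i + t) % n + 1 : ℕ) : Fin (n + 2)) := by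
  rw [arcT, Finset.sum_image]
  intro t1 h1 t2 h2 he
  simp only [Finset.coe_range, Set.mem_Iio, Finset.mem_coe, Finset.mem_range] at h1 h2
  have hpos : 0 < n := by omega
  have l1 : (i + t1) % n < n := Nat.mod_lt _ hpos
  have l2 : (i + t2) % n < n := Nat.mod_lt _ hpos
  have hv := congrArg Fin.val he
  have e1 : ((i + t1) % n + 1) % (n + 2) = (i + t1) % n + 1 := Nat.mod_eq_of_lt (by omega)
  have e2 : ((i + t2) % n + 1) % (n + 2) = (i + t2) % n + 1 := Nat.mod_eq_of_lt (by omega)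
  rw [Fin.val_natCast, Fin.val_natCast, e1, e2] at hv
  have hmod : (i + t1) % n = (i + t2) % n := by omega
  have hcan : t1 % n = t2 % n := Nat.ModEq.add_left_cancel' i hmod
  have e3 : t1 % n = t1 := Nat.mod_eq_of_lt (by omega)
  have e4 : t2 % n = t2 := Nat.mod_eq_of_lt (by omega)
  omega

lemma rot_sum_aux (g : ℕ → ℕ) (t u : ℕ) :
    ∑ i ∈ Finset.range (u + t), g ((i + t) % (t + u)) = ∑ j ∈ Finset.range (t + u), g j := by
  rw [Finset.sum_range_add, Finset.sum_range_add]
  rw [add_comm]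
  congr 1
  · refine Finset.sum_congr rfl fun i hi => ?_
    simp only [Finset.mem_range] at hi
    congr 1
    have he : u + i + t = (t + u) + i := by omega
    rw [he, Nat.add_mod_left, Nat.mod_eq_of_lt (by omega)]
  · refine Finset.sum_congr rfl fun i hi => ?_
    simp only [Finset.mem_range] at hi
    rw [Nat.mod_eq_of_lt (by omega), add_comm]

lemma rot_sum {n : ℕ} (g : ℕ → ℕ) (t : ℕ) (ht : t < n) :
    ∑ i ∈ Finset.range n, g ((i + t) % n) = ∑ j ∈ Finset.range n, g j := by
  obtain ⟨u, rfl⟩ : ∃ u, n = t + u := ⟨n - t, by omega⟩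
  calc ∑ i ∈ Finset.range (t + u), g ((i + t) % (t + u))
      = ∑ i ∈ Finset.range (u + t), g ((i + t) % (t + u)) := by rw [add_comm t u]
    _ = _ := rot_sum_aux g t u

lemma double_sum {n : ℕ} (hn : 3 ≤ n) (g : ℕ → ℕ) :
    ∑ i ∈ Finset.range n, ∑ t ∈ Finset.range (n - 2), g ((i + t) % n)
      = (n - 2) * ∑ j ∈ Finset.range n, g j := by
  rw [Finset.sum_comm]
  rw [Finset.sum_congr rfl fun t ht => rot_sum g t (by simp only [Finset.mem_range] at ht; omega)]
  simp [Finset.sum_const, Finset.card_range, mul_comm]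
lemma aux_no_low (K : Type*) [Field K] (n m : ℕ) (hn : 5 ≤ n) (hm : m = n - 2)
    (a : Fin (n + 2) → ℕ) (hdeg : (∑ i, a i) < n) :
    monom K n a ∉ symbPow K n m := by
  classical
  subst hm
  intro h
  simp only [symbPow, Submodule.mem_iInf, Submodule.mem_inf] at h
  set g : ℕ → ℕ := fun jj => a (((jj + 1 : ℕ) : Fin (n + 2))) with hg
  set A := ∑ jj ∈ Finset.range n, g jj with hA
  have hsig : ∀ i, ∑ jj ∈ arcT n i, a jj = ∑ t ∈ Finset.range (n - 2), g ((i + t) % n) :=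
    fun i => arcT_sum (by omega) i a
  have htot : ∑ i ∈ Finset.range n, ∑ t ∈ Finset.range (n - 2), g ((i + t) % n)
      = (n - 2) * A := by rw [hA]; exact double_sum (by omega) g
  have hex : ∃ i ∈ Finset.range n,
      n * (∑ t ∈ Finset.range (n - 2), g ((i + t) % n)) ≤ (n - 2) * A := by
    apply Finset.exists_le_of_sum_le ⟨0, Finset.mem_range.mpr (by omega)⟩
    rw [← Finset.mul_sum, htot, Finset.sum_const, Finset.card_range, smul_eq_mul]
  obtain ⟨i0, hi0, hsmall⟩ := hex
  set s := ∑ t ∈ Finset.range (n - 2), g ((i0 + t) % n) with hs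
  have hdecomp : (∑ i, a i) = a 0 + a ((n + 1 : ℕ) : Fin (n + 2)) + A := by
    have h1 : ∑ i, a i = ∑ j ∈ Finset.range (n + 2), a ((j : ℕ) : Fin (n + 2)) := by
      rw [← Fin.sum_univ_eq_sum_range]
      exact Finset.sum_congr rfl fun i _ => by rw [Fin.cast_val_eq_self]
    rw [h1, Finset.sum_range_succ, Finset.sum_range_succ', hA, hg]
    simp only [Nat.cast_zero]
    omega
  have hb0 : n - 2 ≤ a 0 + s := by
    have hmm := mem_apexPow_deg K 0 (arcT n i0) a (h i0 hi0).1
    rw [hsig i0, ← hs] at hmm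
    exact hmm
  have hb1 : n - 2 ≤ a ((n + 1 : ℕ) : Fin (n + 2)) + s := by
    have hmm := mem_apexPow_deg K ((n + 1 : ℕ) : Fin (n + 2)) (arcT n i0) a (h i0 hi0).2
    rw [hsig i0, ← hs] at hmm
    exact hmm
  have hdeg' : a 0 + a ((n + 1 : ℕ) : Fin (n + 2)) + A < n := by rw [hdecomp] at hdeg; omega
  obtain ⟨M, rfl⟩ : ∃ M, n = M + 2 := ⟨n - 2, by omega⟩
  have hM3 : 3 ≤ M := by omega
  rw [show M + 2 - 2 = M from by omega] at hb0 hb1 hsmall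
  have hlin : M + A ≤ 2 * s + 1 := by omega
  have hA1 : A ≤ M + 1 := by omega
  have k1 : (M + 2) * (M + A) ≤ (M + 2) * (2 * s + 1) := Nat.mul_le_mul_left _ hlin
  have k2 : (M + 2) * (2 * s + 1) = 2 * ((M + 2) * s) + (M + 2) := by ring
  have k3 : 2 * ((M + 2) * s) ≤ 2 * (M * A) := Nat.mul_le_mul_left _ hsmall
  have k4 : M * A ≤ M * (M + 1) := Nat.mul_le_mul_left _ hA1
  have hA2 : A ≤ 1 := by nlinarith [k1, k2, k3, k4]
  have k5 : M * A ≤ M := by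
    calc M * A ≤ M * 1 := Nat.mul_le_mul_left _ hA2
    _ = M := by ring
  have k6 : 9 ≤ M * M := Nat.mul_le_mul hM3 hM3
  nlinarith [k1, k2, k3, k5, k6]


/-- For `k ≥ 3` and `n = 2k - 1`, no monomial of total degree strictly less than
`2k - 1` belongs to `I_{B_{2k-1}}^{(2k-3)}`. -/
theorem no_low_degree_monomial_odd (K : Type*) [Field K] (k : ℕ) (hk : 3 ≤ k)
    (a : Fin (2 * k - 1 + 2) → ℕ) (hdeg : (∑ i, a i) < 2 * k - 1) :
    monom K (2 * k - 1) a ∉ symbPow K (2 * k - 1) (2 * k - 3) :=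
  aux_no_low K (2 * k - 1) (2 * k - 3) (by omega) (by omega) a hdeg
end
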